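/- Let F be a field, n ≥ 3, and let g = (V,[,]) be an n-dimensional algebra with [x,x] = 0 for all x, and suppose [x,y] ∈ span_F(x,y) for all x,y ∈ V. If x,y,z are distinct elements of a basis of V and the structure vector λ (relative to that basis) is written [e_i,e_j] = λ_{iji} e_i + λ_{ijj} e_j, then λ_{iji} = λ_{kjk} whenever j ∉ {i,k}. Consequently λ lies in the subspace P = {λ ∈ Sk_n(F) : λ_{ijk} = 0 whenever k ∉ {i,j}, and λ_{iji} = λ_{kjk} whenever j ∉ {i,k}}. -/
import Mathlib


open scoped BigOperators

/-- if the algebra with structure vector `λ` (w.r.t. the standard basis of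
`Fⁿ`, `n ≥ 3`) satisfies `[x,x] = 0` and `[x,y] ∈ span{x,y}` for all `x,y`, then
`λ_{ijk} = 0` whenever `k ∉ {i,j}` and `λ_{iji} = λ_{kjk}` whenever `j ∉ {i,k}`; i.e.
`λ` lies in the subspace `P`. -/
theorem condition_star_structure {F : Type*} [Field F] {n : ℕ} (hn : 3 ≤ n)
    (lam : Fin n → Fin n → Fin n → F)
    (hskew : ∀ x : Fin n → F,
      (fun k => ∑ i, ∑ j, lam i j k * x i * x j) = (0 : Fin n → F))
    (hstar : ∀ x y : Fin n → F,
      (fun k => ∑ i, ∑ j, lam i j k * x i * y j) ∈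
        Submodule.span F ({x, y} : Set (Fin n → F))) :
    (∀ i j k : Fin n, k ≠ i → k ≠ j → lam i j k = 0) ∧
      (∀ i j k : Fin n, j ≠ i → j ≠ k → lam i j i = lam k j k) := by
  have h1 : ∀ i j k : Fin n, k ≠ i → k ≠ j → lam i j k = 0 := by
    intro i j k hki hkj
    obtain ⟨a, b, hab⟩ := Submodule.mem_span_pair.mp (hstar (Pi.single i 1) (Pi.single j 1))
    have := congrFun hab k
    simp [Pi.single_apply, hki.symm, hkj.symm, mul_ite, Finset.sum_ite_eq'] at this
    rw [← this]
  refine ⟨h1, ?_⟩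
  intro i j k hji hjk
  by_cases hik : i = k
  · rw [hik]
  · obtain ⟨a, b, hab⟩ := Submodule.mem_span_pair.mp
      (hstar (Pi.single i 1 + Pi.single k 1) (Pi.single j 1))
    have hi := congrFun hab i
    have hk := congrFun hab k
    have hkji : lam k j i = 0 := h1 k j i hik (Ne.symm hji)
    have hijk : lam i j k = 0 := h1 i j k (Ne.symm hik) (Ne.symm hjk)
    simp [Pi.single_apply, Ne.symm hji, Ne.symm hjk, hik, Ne.symm hik, mul_ite,
      mul_add, add_mul, Finset.sum_add_distrib, Finset.sum_ite_eq', hkji, hijk] at hi hk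
    rw [← hi, ← hk]
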